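/- arXiv:1306.1605 — 7 statements merged into one kernel-verified Lean document; each statement's English description precedes it below -/
import Mathlib

section
/- Let D ⊂ [0,1] be a Borel set of Lebesgue measure ρ, let n be a positive integer and 0 < b < ρ/n. Then there exist n points z_1, ..., z_n in D which belong to an arithmetic progression of step b, i.e., z_i − z_j is an integer multiple of b for all i, j. -/
open MeasureTheory
open scoped Classical

/-- Counting lemma: if every point lies in at most `m` of the measurable sets
`E k ⊆ A` (for `k` in a finset `F`), then the sum of their measures is at most
`m * volume A`. -/
lemma sum_measure_le_of_card_le (F : Finset ℕ) (E : ℕ → Set ℝ) (A : Set ℝ)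
    (hAmeas : MeasurableSet A)
    (hEmeas : ∀ k, MeasurableSet (E k)) (hEA : ∀ k, E k ⊆ A)
    (m : ℕ) (hcard : ∀ t : ℝ, (F.filter (fun k => t ∈ E k)).card ≤ m) :
    ∑ k ∈ F, volume (E k) ≤ m * volume A := by
  have h1 : ∀ k ∈ F, volume (E k) = ∫⁻ t, (E k).indicator (fun _ => (1 : ENNReal)) t := by
    intro k _
    rw [lintegral_indicator (hEmeas k) _]
    simp
  rw [Finset.sum_congr rfl h1,
    ← lintegral_finset_sum _ (fun k _ => (measurable_const.indicator (hEmeas k)))]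
  have h2 : (m : ENNReal) * volume A = ∫⁻ t, A.indicator (fun _ => (m : ENNReal)) t := by
    rw [lintegral_indicator hAmeas _, setLIntegral_const, mul_comm]
  rw [h2]
  refine lintegral_mono fun t => ?_
  by_cases ht : t ∈ A
  · have : ∑ k ∈ F, (E k).indicator (fun _ => (1 : ENNReal)) t
        = ((F.filter (fun k => t ∈ E k)).card : ENNReal) := by
      rw [Finset.card_filter]
      push_cast
      refine Finset.sum_congr rfl fun k _ => ?_
      by_cases hk : t ∈ E k <;> simp [hk, Set.indicator_apply]
    rw [this, Set.indicator_of_mem ht]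
    exact (Nat.cast_le (α := ENNReal)).2 (hcard t)
  · have : ∀ k ∈ F, (E k).indicator (fun _ => (1 : ENNReal)) t = 0 := by
      intro k _
      exact Set.indicator_of_notMem (fun h => ht (hEA k h)) _
    rw [Finset.sum_congr rfl this]
    simp

/-- If `D ⊆ [0,1]` is measurable of Lebesgue measure `ρ`, `n ≥ 1` and `0 < b < ρ/n`,
then there exist `n` (distinct) points of `D` lying in an arithmetic progression of step `b`,
i.e. all pairwise differences are integer multiples of `b`. -/
theorem stmt2 (D : Set ℝ) (hDmeas : MeasurableSet D) (hD1 : D ⊆ Set.Icc 0 1)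
    (ρ : ℝ) (hρpos : 0 < ρ) (hρ : volume D = ENNReal.ofReal ρ)
    (n : ℕ) (hn : 0 < n) (b : ℝ) (hb : 0 < b) (hbρ : b < ρ / n) :
    ∃ z : Fin n → ℝ, Function.Injective z ∧ (∀ i, z i ∈ D) ∧
      ∀ i j, ∃ m : ℤ, z i - z j = m * b := by
  -- number of slices
  set K : ℕ := ⌈1 / b⌉₊ + 1 with hK
  have hKb : 1 < K * b := by
    have h1 : (1 : ℝ) / b ≤ ⌈1 / b⌉₊ := Nat.le_ceil _
    have : (1 : ℝ) ≤ ⌈1 / b⌉₊ * b := by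
      rw [← div_le_iff₀ hb] at *
      linarith
    calc (1:ℝ) ≤ ⌈1 / b⌉₊ * b := this
      _ < (⌈1 / b⌉₊ + 1) * b := by nlinarith
      _ = K * b := by push_cast [hK]; ring
  -- translated slices
  set E : ℕ → Set ℝ := fun k => Set.Ico 0 b ∩ (fun t => t + k * b) ⁻¹' D with hE
  have hEmeas : ∀ k, MeasurableSet (E k) := by
    intro k
    exact measurableSet_Ico.inter ((measurable_id.add_const _) hDmeas)
  have hEA : ∀ k, E k ⊆ Set.Ico 0 b := fun k t ht => ht.1
  -- slices of D
  set S : ℕ → Set ℝ := fun k => D ∩ Set.Ico (k * b) ((k + 1) * b) with hS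
  have hSmeas : ∀ k, MeasurableSet (S k) := fun k => hDmeas.inter measurableSet_Ico
  have hEvol : ∀ k, volume (E k) = volume (S k) := by
    intro k
    have : E k = (fun t => t + k * b) ⁻¹' (S k) := by
      ext t
      simp only [hE, hS, Set.mem_preimage, Set.mem_inter_iff, Set.mem_Ico]
      constructor
      · rintro ⟨⟨h0, h1⟩, hd⟩
        exact ⟨hd, by linarith, by nlinarith⟩
      · rintro ⟨hd, h0, h1⟩
        exact ⟨⟨by linarith, by nlinarith⟩, hd⟩
    rw [this, measure_preimage_add_right]
  -- D is the disjoint union of the slices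
  have hcover : D = ⋃ k ∈ Finset.range K, S k := by
    ext x
    simp only [Set.mem_iUnion, hS, Set.mem_inter_iff, Set.mem_Ico, Finset.mem_range]
    constructor
    · intro hx
      obtain ⟨hx0, hx1⟩ := hD1 hx
      refine ⟨⌊x / b⌋₊, ?_, hx, ?_, ?_⟩
      · by_contra h
        push_neg at h
        have : (K : ℝ) * b ≤ ⌊x / b⌋₊ * b := by
          have : (K : ℝ) ≤ ⌊x / b⌋₊ := by exact_mod_cast h
          nlinarith
        have hfl : (⌊x / b⌋₊ : ℝ) ≤ x / b := Nat.floor_le (by positivity)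
        have : (⌊x / b⌋₊ : ℝ) * b ≤ x := by
          rw [← le_div_iff₀ hb]; exact hfl
        linarith
      · have hfl : (⌊x / b⌋₊ : ℝ) ≤ x / b := Nat.floor_le (by positivity)
        rw [← le_div_iff₀ hb]; exact hfl
      · have : x / b < ⌊x / b⌋₊ + 1 := Nat.lt_floor_add_one _
        calc x = x / b * b := by field_simp
          _ < (⌊x / b⌋₊ + 1) * b := by nlinarith
    · rintro ⟨k, _, hx, _⟩
      exact hx
  have hdisj : (↑(Finset.range K) : Set ℕ).PairwiseDisjoint S := by
    intro i _ j _ hij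
    have : ∀ a c : ℕ, a < c → Disjoint (S a) (S c) := by
      intro a c hac
      refine Set.disjoint_left.2 fun x hxa hxc => ?_
      have h1 : x < (a + 1) * b := hxa.2.2
      have h2 : (c : ℝ) * b ≤ x := hxc.2.1
      have : ((a : ℝ) + 1) ≤ c := by exact_mod_cast hac
      nlinarith
    rcases lt_or_gt_of_ne hij with h | h
    · exact this i j h
    · exact (this j i h).symm
  have hsum : ∑ k ∈ Finset.range K, volume (S k) = ENNReal.ofReal ρ := by
    rw [← measure_biUnion_finset hdisj (fun k _ => hSmeas k), ← hcover, hρ]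
  -- key: some t lies in at least n of the E k
  have hkey : ∃ t : ℝ, n ≤ ((Finset.range K).filter (fun k => t ∈ E k)).card := by
    by_contra h
    push_neg at h
    have hcard : ∀ t : ℝ, ((Finset.range K).filter (fun k => t ∈ E k)).card ≤ n - 1 := by
      intro t
      have := h t
      omega
    have hle := sum_measure_le_of_card_le (Finset.range K) E (Set.Ico 0 b)
      measurableSet_Ico hEmeas hEA (n - 1)
      (fun t => by rw [Finset.filter_congr_decidable]; exact hcard t)
    rw [Finset.sum_congr rfl (fun k _ => hEvol k), hsum] at hle
    rw [Real.volume_Ico, sub_zero] at hle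
    have hb' : (0:ℝ) ≤ b := hb.le
    rw [← ENNReal.ofReal_natCast, ← ENNReal.ofReal_mul (by positivity)] at hle
    have : ρ ≤ (n - 1 : ℕ) * b := by
      have := (ENNReal.ofReal_le_ofReal_iff (by positivity)).1 hle
      linarith
    have hn1 : ((n - 1 : ℕ) : ℝ) ≤ (n : ℝ) - 1 := by
      have : (1:ℕ) ≤ n := hn
      push_cast [Nat.cast_sub this]
      linarith
    have hnb : (n : ℝ) * b < ρ := by
      rw [lt_div_iff₀ (by exact_mod_cast hn : (0:ℝ) < (n:ℝ))] at hbρ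
      linarith
    nlinarith [hb]
  obtain ⟨t, ht⟩ := hkey
  obtain ⟨F, hFsub, hFcard⟩ := Finset.exists_subset_card_eq ht
  have hmem : ∀ k ∈ F, t + k * b ∈ D := by
    intro k hk
    have h' := hFsub hk
    rw [Finset.mem_filter] at h'
    exact h'.2.2
  set e : Fin n ↪o ℕ := F.orderEmbOfFin hFcard with he
  refine ⟨fun i => t + (e i : ℝ) * b, ?_, ?_, ?_⟩
  · intro i j hij
    have hij' : t + (e i : ℝ) * b = t + (e j : ℝ) * b := hij
    have h1 : ((e i : ℕ) : ℝ) * b = ((e j : ℕ) : ℝ) * b := by linarith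
    have h2 : ((e i : ℕ) : ℝ) = ((e j : ℕ) : ℝ) := mul_right_cancel₀ hb.ne' h1
    exact e.injective (Nat.cast_injective h2)
  · intro i
    exact hmem (e i) (F.orderEmbOfFin_mem hFcard i)
  · intro i j
    exact ⟨(e i : ℤ) - (e j : ℤ), by push_cast; ring⟩
end

section
/- Let A, B be complex d×d matrices and 0 < ρ ≤ 1/4 be such that σ_2(A) ≤ ρ²σ_1(A), σ_2(B) ≤ ρ²σ_1(B), and σ_1(BA) ≥ 4ρ σ_1(B)σ_1(A). If w is a unit vector in ℂ^d with ‖P_{E⁺(A)} w‖ ≥ ρ, then Aw ≠ 0 and ‖P_{E⁺(B)} (Aw/‖Aw‖)‖ ≥ 2ρ. -/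
/-- The second singular value of an operator on `ℂ^d`, via the Courant–Fischer
min-max characterization: the infimum over vectors `v` of the supremum of `‖A w‖`
over unit vectors `w` orthogonal to `v`.  (The first singular value is `‖A‖`.) -/
noncomputable def sigma2 {d : ℕ}
    (A : EuclideanSpace ℂ (Fin d) →L[ℂ] EuclideanSpace ℂ (Fin d)) : ℝ :=
  ⨅ v : EuclideanSpace ℂ (Fin d),
    sSup ((fun w => ‖A w‖) '' {w | ‖w‖ = 1 ∧ (inner ℂ v w : ℂ) = 0})

set_option maxHeartbeats 2000000

lemma pyth' {d : ℕ} (x y : EuclideanSpace ℂ (Fin d)) (h : (inner ℂ x y : ℂ) = 0) :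
    ‖x + y‖ ^ 2 = ‖x‖ ^ 2 + ‖y‖ ^ 2 := by
  rw [norm_add_sq (𝕜 := ℂ), h]
  simp

lemma sigma2_nonneg' {d : ℕ} (A : EuclideanSpace ℂ (Fin d) →L[ℂ] EuclideanSpace ℂ (Fin d)) :
    0 ≤ sigma2 A := by
  apply le_ciInf
  intro v
  apply Real.sSup_nonneg
  rintro x ⟨w, -, rfl⟩
  positivity

/-- If `eA` is a unit vector maximizing `‖A ·‖`, then `A eA` is orthogonal to the image
of the orthogonal complement of `eA`. -/
lemma orth_lemma' {d : ℕ} (A : EuclideanSpace ℂ (Fin d) →L[ℂ] EuclideanSpace ℂ (Fin d))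
    (eA : EuclideanSpace ℂ (Fin d)) (heA : ‖eA‖ = 1) (hAeA : ‖A eA‖ = ‖A‖)
    (z : EuclideanSpace ℂ (Fin d)) (hz : (inner ℂ eA z : ℂ) = 0) :
    (inner ℂ (A eA) (A z) : ℂ) = 0 := by
  by_contra hc
  set c : ℂ := inner ℂ (A eA) (A z) with hcdef
  have hcpos : 0 < ‖c‖ := norm_pos_iff.mpr hc
  set E : ℝ := ‖A‖ ^ 2 * ‖z‖ ^ 2 - ‖A z‖ ^ 2 with hEdef
  have key : ∀ t : ℝ, 2 * t * ‖c‖ ^ 2 ≤ t ^ 2 * ‖c‖ ^ 2 * E := by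
    intro t
    set τ : ℂ := (t : ℂ) * (starRingEnd ℂ c) with hτ
    have hτn : ‖τ‖ ^ 2 = t ^ 2 * ‖c‖ ^ 2 := by
      rw [hτ, norm_mul, RCLike.norm_conj, mul_pow, Complex.norm_real,
        Real.norm_eq_abs, sq_abs]
    have hre : RCLike.re (τ * c) = t * ‖c‖ ^ 2 := by
      rw [hτ, mul_assoc, RCLike.conj_mul]
      simp [RCLike.mul_re]
      left
      norm_cast
    have hAy : ‖A (eA + τ • z)‖ ^ 2 = ‖A‖ ^ 2 + 2 * (t * ‖c‖ ^ 2) + ‖τ‖ ^ 2 * ‖A z‖ ^ 2 := by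
      rw [map_add, map_smul, norm_add_sq (𝕜 := ℂ), hAeA, inner_smul_right, norm_smul]
      rw [← hcdef, hre]
      ring
    have hy : ‖eA + τ • z‖ ^ 2 = 1 + ‖τ‖ ^ 2 * ‖z‖ ^ 2 := by
      rw [norm_add_sq (𝕜 := ℂ), heA, inner_smul_right, hz, norm_smul]
      simp
      ring
    have hle : ‖A (eA + τ • z)‖ ^ 2 ≤ ‖A‖ ^ 2 * ‖eA + τ • z‖ ^ 2 := by
      have := A.le_opNorm (eA + τ • z)
      nlinarith [norm_nonneg (A (eA + τ • z)), norm_nonneg (eA + τ • z), norm_nonneg A]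
    rw [hAy, hy, hτn] at hle
    nlinarith
  have h1 := key 1
  have hE : 0 < E := by nlinarith
  have h2 := key (1 / E)
  have hE0 : E ≠ 0 := ne_of_gt hE
  rw [div_pow, one_pow] at h2
  field_simp at h2
  norm_num at h2

/-- Orthogonal decomposition along a unit vector. -/
lemma decomp' {d : ℕ} (e x : EuclideanSpace ℂ (Fin d)) (he : ‖e‖ = 1) :
    (inner ℂ e (x - (inner ℂ e x : ℂ) • e) : ℂ) = 0 ∧
    ‖x‖ ^ 2 = ‖(inner ℂ e x : ℂ)‖ ^ 2 + ‖x - (inner ℂ e x : ℂ) • e‖ ^ 2 := by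
  set c : ℂ := inner ℂ e x with hc
  set u : EuclideanSpace ℂ (Fin d) := x - c • e with hudef
  have h1 : (inner ℂ e u : ℂ) = 0 := by
    rw [hudef, inner_sub_right, inner_smul_right, inner_self_eq_norm_sq_to_K, he, ← hc]
    push_cast
    ring
  refine ⟨h1, ?_⟩
  have hx : x = c • e + u := by rw [hudef]; abel
  have horth : (inner ℂ (c • e) u : ℂ) = 0 := by rw [inner_smul_left, h1, mul_zero]
  calc ‖x‖ ^ 2 = ‖c • e + u‖ ^ 2 := by rw [← hx]
  _ = ‖c • e‖ ^ 2 + ‖u‖ ^ 2 := by rw [norm_add_sq (𝕜 := ℂ), horth]; simp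
  _ = ‖c‖ ^ 2 + ‖u‖ ^ 2 := by rw [norm_smul, he, mul_one]

/-- A unit maximizer witnesses the bound `‖A u‖ ≤ σ₂(A)` on its orthogonal complement. -/
lemma unit_bound' {d : ℕ} (A : EuclideanSpace ℂ (Fin d) →L[ℂ] EuclideanSpace ℂ (Fin d))
    (eA : EuclideanSpace ℂ (Fin d)) (heA : ‖eA‖ = 1) (hAeA : ‖A eA‖ = ‖A‖)
    (u : EuclideanSpace ℂ (Fin d)) (hu1 : ‖u‖ = 1) (hu : (inner ℂ eA u : ℂ) = 0) :
    ‖A u‖ ≤ sigma2 A := by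
  apply le_ciInf
  intro v
  have bdd : BddAbove ((fun w => ‖A w‖) '' {w | ‖w‖ = 1 ∧ (inner ℂ v w : ℂ) = 0}) := by
    refine ⟨‖A‖, ?_⟩
    rintro x ⟨w0, ⟨hw1, -⟩, rfl⟩
    calc ‖A w0‖ ≤ ‖A‖ * ‖w0‖ := A.le_opNorm w0
    _ = ‖A‖ := by rw [hw1, mul_one]
  set α : ℂ := inner ℂ v eA with hα
  set β : ℂ := inner ℂ v u with hβ
  by_cases h0 : ‖α‖ ^ 2 + ‖β‖ ^ 2 = 0
  · have hβ0 : β = 0 := by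
      have := sq_nonneg ‖α‖; have := sq_nonneg ‖β‖
      have : ‖β‖ = 0 := by nlinarith
      simpa using this
    exact le_csSup bdd ⟨u, ⟨hu1, by rw [← hβ, hβ0]⟩, rfl⟩
  · have hr2 : 0 < ‖α‖ ^ 2 + ‖β‖ ^ 2 := by
      rcases lt_or_eq_of_le (by positivity : (0:ℝ) ≤ ‖α‖ ^ 2 + ‖β‖ ^ 2) with h | h
      · exact h
      · exact absurd h.symm h0
    set r : ℝ := Real.sqrt (‖α‖ ^ 2 + ‖β‖ ^ 2) with hrdef
    have hrpos : 0 < r := Real.sqrt_pos.mpr hr2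
    have hrsq : r ^ 2 = ‖α‖ ^ 2 + ‖β‖ ^ 2 := Real.sq_sqrt (le_of_lt hr2)
    set a : ℂ := (r : ℂ)⁻¹ * β with ha
    set b : ℂ := -((r : ℂ)⁻¹ * α) with hb
    set W : EuclideanSpace ℂ (Fin d) := a • eA + b • u with hW
    have hab : ‖a‖ ^ 2 + ‖b‖ ^ 2 = 1 := by
      rw [ha, hb, norm_neg, norm_mul, norm_mul, norm_inv, Complex.norm_real,
        Real.norm_eq_abs, abs_of_pos hrpos]
      field_simp
      rw [add_comm]
      exact hrsq.symm
    have horth : (inner ℂ (a • eA) (b • u) : ℂ) = 0 := by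
      rw [inner_smul_left, inner_smul_right, hu]
      ring
    have hWnorm : ‖W‖ = 1 := by
      have h2 : ‖W‖ ^ 2 = 1 := by
        rw [hW, pyth' _ _ horth, norm_smul, norm_smul, hu1, heA]
        simpa using hab
      nlinarith [norm_nonneg W]
    have hWv : (inner ℂ v W : ℂ) = 0 := by
      rw [hW, inner_add_right, inner_smul_right, inner_smul_right, ← hα, ← hβ, ha, hb]
      ring
    have hAW : ‖A u‖ ≤ ‖A W‖ := by
      have horthA : (inner ℂ (a • A eA) (b • A u) : ℂ) = 0 := by
        rw [inner_smul_left, inner_smul_right, orth_lemma' A eA heA hAeA u hu]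
        ring
      have hAW2 : ‖A W‖ ^ 2 = ‖a‖ ^ 2 * ‖A‖ ^ 2 + ‖b‖ ^ 2 * ‖A u‖ ^ 2 := by
        have hAWe : A W = a • A eA + b • A u := by rw [hW]; simp [map_add, map_smul]
        rw [hAWe, pyth' _ _ horthA, norm_smul, norm_smul, hAeA]
        ring
      have hAu : ‖A u‖ ≤ ‖A‖ := by
        calc ‖A u‖ ≤ ‖A‖ * ‖u‖ := A.le_opNorm u
        _ = ‖A‖ := by rw [hu1, mul_one]
      have hsq : ‖A u‖ ^ 2 ≤ ‖A W‖ ^ 2 := by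
        rw [hAW2]
        nlinarith [mul_le_mul_of_nonneg_left
          (pow_le_pow_left₀ (norm_nonneg (A u)) hAu 2) (sq_nonneg ‖a‖), hab]
      nlinarith [hsq, norm_nonneg (A W), norm_nonneg (A u)]
    exact le_trans hAW (le_csSup bdd ⟨W, ⟨hWnorm, hWv⟩, rfl⟩)

lemma key_bound' {d : ℕ} (A : EuclideanSpace ℂ (Fin d) →L[ℂ] EuclideanSpace ℂ (Fin d))
    (eA : EuclideanSpace ℂ (Fin d)) (heA : ‖eA‖ = 1) (hAeA : ‖A eA‖ = ‖A‖)
    (u : EuclideanSpace ℂ (Fin d)) (hu : (inner ℂ eA u : ℂ) = 0) :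
    ‖A u‖ ≤ sigma2 A * ‖u‖ := by
  by_cases h : u = 0
  · simp [h]
  · have hn : 0 < ‖u‖ := norm_pos_iff.mpr h
    have hcn : ‖((‖u‖ : ℂ))⁻¹‖ = ‖u‖⁻¹ := by
      rw [norm_inv, Complex.norm_real, Real.norm_eq_abs, abs_of_pos hn]
    have h1 : ‖((‖u‖ : ℂ))⁻¹ • u‖ = 1 := by
      rw [norm_smul, hcn, inv_mul_cancel₀ (ne_of_gt hn)]
    have h2 : (inner ℂ eA (((‖u‖ : ℂ))⁻¹ • u) : ℂ) = 0 := by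
      rw [inner_smul_right, hu, mul_zero]
    have := unit_bound' A eA heA hAeA _ h1 h2
    rw [map_smul, norm_smul, hcn] at this
    calc ‖A u‖ = ‖u‖ * (‖u‖⁻¹ * ‖A u‖) := by field_simp
    _ ≤ ‖u‖ * sigma2 A := mul_le_mul_of_nonneg_left this (le_of_lt hn)
    _ = sigma2 A * ‖u‖ := mul_comm _ _


/-- Lower and upper bounds for `‖A w‖` for a unit vector `w`, in terms of the component
of `w` along the top singular direction `eA`. -/
lemma L1' {d : ℕ} (A : EuclideanSpace ℂ (Fin d) →L[ℂ] EuclideanSpace ℂ (Fin d))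
    (eA : EuclideanSpace ℂ (Fin d)) (heA : ‖eA‖ = 1) (hAeA : ‖A eA‖ = ‖A‖)
    (w : EuclideanSpace ℂ (Fin d)) (hw : ‖w‖ = 1) :
    ‖(inner ℂ eA w : ℂ)‖ * ‖A‖ - sigma2 A ≤ ‖A w‖ ∧
    ‖A w‖ ^ 2 ≤ ‖(inner ℂ eA w : ℂ)‖ ^ 2 * ‖A‖ ^ 2 + (sigma2 A) ^ 2 := by
  set c : ℂ := inner ℂ eA w with hc
  set u : EuclideanSpace ℂ (Fin d) := w - c • eA with hudef
  obtain ⟨huorth, hwsq⟩ := decomp' eA w heA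
  rw [← hc, ← hudef] at huorth hwsq
  rw [hw] at hwsq
  clear_value c u
  have hun : ‖u‖ ≤ 1 := by nlinarith [norm_nonneg u, sq_nonneg ‖c‖]
  have hAu : ‖A u‖ ≤ sigma2 A := by
    calc ‖A u‖ ≤ sigma2 A * ‖u‖ := key_bound' A eA heA hAeA u huorth
    _ ≤ sigma2 A * 1 := mul_le_mul_of_nonneg_left hun (sigma2_nonneg' A)
    _ = sigma2 A := mul_one _
  have hweq : w = c • eA + u := by rw [hudef]; abel
  have hAweq : A w = c • A eA + A u := by
    conv_lhs => rw [hweq]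
    simp [map_add, map_smul]
  have hcAeA : ‖c • A eA‖ = ‖c‖ * ‖A‖ := by rw [norm_smul, hAeA]
  constructor
  · have h1 : c • A eA = A w - A u := by rw [hAweq]; abel
    have h2 := norm_sub_le (A w) (A u)
    rw [← h1, hcAeA] at h2
    linarith
  · have horthAu : (inner ℂ (c • A eA) (A u) : ℂ) = 0 := by
      rw [inner_smul_left, orth_lemma' A eA heA hAeA u huorth, mul_zero]
    have hAwsq : ‖A w‖ ^ 2 = ‖c‖ ^ 2 * ‖A‖ ^ 2 + ‖A u‖ ^ 2 := by
      rw [hAweq, pyth' _ _ horthAu, hcAeA]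
      ring
    have : ‖A u‖ ^ 2 ≤ (sigma2 A) ^ 2 :=
      pow_le_pow_left₀ (norm_nonneg _) hAu 2
    linarith

/-- Lower bound on `‖B (A w)‖` for a unit vector `w`. -/
lemma L2' {d : ℕ} (A B : EuclideanSpace ℂ (Fin d) →L[ℂ] EuclideanSpace ℂ (Fin d))
    (eA : EuclideanSpace ℂ (Fin d)) (heA : ‖eA‖ = 1) (hAeA : ‖A eA‖ = ‖A‖)
    (w : EuclideanSpace ℂ (Fin d)) (hw : ‖w‖ = 1) :
    ‖(inner ℂ eA w : ℂ)‖ * ‖B (A eA)‖ - ‖B‖ * sigma2 A ≤ ‖B (A w)‖ := by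
  set c : ℂ := inner ℂ eA w with hc
  set u : EuclideanSpace ℂ (Fin d) := w - c • eA with hudef
  obtain ⟨huorth, hwsq⟩ := decomp' eA w heA
  rw [← hc, ← hudef] at huorth hwsq
  rw [hw] at hwsq
  clear_value c u
  have hun : ‖u‖ ≤ 1 := by nlinarith [norm_nonneg u, sq_nonneg ‖c‖]
  have hAu : ‖A u‖ ≤ sigma2 A := by
    calc ‖A u‖ ≤ sigma2 A * ‖u‖ := key_bound' A eA heA hAeA u huorth
    _ ≤ sigma2 A * 1 := mul_le_mul_of_nonneg_left hun (sigma2_nonneg' A)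
    _ = sigma2 A := mul_one _
  have hBAu : ‖B (A u)‖ ≤ ‖B‖ * sigma2 A := by
    calc ‖B (A u)‖ ≤ ‖B‖ * ‖A u‖ := B.le_opNorm _
    _ ≤ ‖B‖ * sigma2 A := mul_le_mul_of_nonneg_left hAu (norm_nonneg B)
  have hweq : w = c • eA + u := by rw [hudef]; abel
  have hBAweq : B (A w) = c • B (A eA) + B (A u) := by
    conv_lhs => rw [hweq]
    simp [map_add, map_smul]
  have h1 : c • B (A eA) = B (A w) - B (A u) := by rw [hBAweq]; abel
  have h2 := norm_sub_le (B (A w)) (B (A u))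
  rw [← h1, norm_smul] at h2
  linarith

/-- Upper bound on `‖B x‖` for a unit vector `x`. -/
lemma L3' {d : ℕ} (B : EuclideanSpace ℂ (Fin d) →L[ℂ] EuclideanSpace ℂ (Fin d))
    (eB : EuclideanSpace ℂ (Fin d)) (heB : ‖eB‖ = 1) (hBeB : ‖B eB‖ = ‖B‖)
    (x : EuclideanSpace ℂ (Fin d)) (hx : ‖x‖ = 1) :
    ‖B x‖ ≤ ‖(inner ℂ eB x : ℂ)‖ * ‖B‖ + sigma2 B := by
  set p : ℂ := inner ℂ eB x with hp
  set q : EuclideanSpace ℂ (Fin d) := x - p • eB with hqdef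
  obtain ⟨hqorth, hxsq⟩ := decomp' eB x heB
  rw [← hp, ← hqdef] at hqorth hxsq
  rw [hx] at hxsq
  clear_value p q
  have hqn : ‖q‖ ≤ 1 := by nlinarith [norm_nonneg q, sq_nonneg ‖p‖]
  have hBq : ‖B q‖ ≤ sigma2 B := by
    calc ‖B q‖ ≤ sigma2 B * ‖q‖ := key_bound' B eB heB hBeB q hqorth
    _ ≤ sigma2 B * 1 := mul_le_mul_of_nonneg_left hqn (sigma2_nonneg' B)
    _ = sigma2 B := mul_one _
  have hxeq : x = p • eB + q := by rw [hqdef]; abel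
  have hBxeq : B x = p • B eB + B q := by
    conv_lhs => rw [hxeq]
    simp [map_add, map_smul]
  calc ‖B x‖ = ‖p • B eB + B q‖ := by rw [hBxeq]
  _ ≤ ‖p • B eB‖ + ‖B q‖ := norm_add_le _ _
  _ ≤ ‖p‖ * ‖B‖ + sigma2 B := by
      rw [norm_smul, hBeB]
      exact add_le_add le_rfl hBq

/-- Upper bound on the composite norm in terms of `‖B (A eA)‖`. -/
lemma L4' {d : ℕ} (A B : EuclideanSpace ℂ (Fin d) →L[ℂ] EuclideanSpace ℂ (Fin d))
    (eA : EuclideanSpace ℂ (Fin d)) (heA : ‖eA‖ = 1) (hAeA : ‖A eA‖ = ‖A‖) :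
    ‖B.comp A‖ ≤ ‖B (A eA)‖ + ‖B‖ * sigma2 A := by
  apply ContinuousLinearMap.opNorm_le_bound
  · have := sigma2_nonneg' A
    positivity
  intro x
  set cx : ℂ := inner ℂ eA x with hcx
  set ux : EuclideanSpace ℂ (Fin d) := x - cx • eA with huxdef
  obtain ⟨hxorth, hxsq⟩ := decomp' eA x heA
  rw [← hcx, ← huxdef] at hxorth hxsq
  clear_value cx ux
  have hcxle : ‖cx‖ ≤ ‖x‖ := by nlinarith [norm_nonneg ux, norm_nonneg cx, norm_nonneg x]
  have huxle : ‖ux‖ ≤ ‖x‖ := by nlinarith [norm_nonneg ux, norm_nonneg cx, norm_nonneg x]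
  have hxeq : x = cx • eA + ux := by rw [huxdef]; abel
  have hBAx : (B.comp A) x = cx • B (A eA) + B (A ux) := by
    conv_lhs => rw [ContinuousLinearMap.comp_apply, hxeq]
    simp [map_add, map_smul]
  have hAux : ‖A ux‖ ≤ sigma2 A * ‖x‖ := by
    calc ‖A ux‖ ≤ sigma2 A * ‖ux‖ := key_bound' A eA heA hAeA ux hxorth
    _ ≤ sigma2 A * ‖x‖ := mul_le_mul_of_nonneg_left huxle (sigma2_nonneg' A)
  rw [hBAx]
  calc ‖cx • B (A eA) + B (A ux)‖ ≤ ‖cx • B (A eA)‖ + ‖B (A ux)‖ := norm_add_le _ _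
  _ ≤ ‖cx‖ * ‖B (A eA)‖ + ‖B‖ * ‖A ux‖ := by
      rw [norm_smul]
      exact add_le_add le_rfl (B.le_opNorm _)
  _ ≤ ‖x‖ * ‖B (A eA)‖ + ‖B‖ * (sigma2 A * ‖x‖) :=
      add_le_add (mul_le_mul_of_nonneg_right hcxle (norm_nonneg _))
        (mul_le_mul_of_nonneg_left hAux (norm_nonneg B))
  _ = (‖B (A eA)‖ + ‖B‖ * sigma2 A) * ‖x‖ := by ring

/-- If `σ₂(A) ≤ ρ²σ₁(A)`, `σ₂(B) ≤ ρ²σ₁(B)`, `σ₁(BA) ≥ 4ρσ₁(B)σ₁(A)` with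
`0 < ρ ≤ 1/4`, and `w` is a unit vector with `‖P_{E⁺(A)} w‖ ≥ ρ`, then `Aw ≠ 0` and
`‖P_{E⁺(B)} (Aw/‖Aw‖)‖ ≥ 2ρ`.  Here the top singular direction `E⁺(A)` is represented
by a maximizing unit vector `eA` (unique up to phase, as `σ₂(A) < σ₁(A)`), and
`‖P_{E⁺(A)} w‖ = |⟨eA, w⟩|`. -/
theorem stmt3 {d : ℕ}
    (A B : EuclideanSpace ℂ (Fin d) →L[ℂ] EuclideanSpace ℂ (Fin d))
    (ρ : ℝ) (hρ : 0 < ρ) (hρ4 : ρ ≤ 1 / 4)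
    (hA2 : sigma2 A ≤ ρ ^ 2 * ‖A‖) (hB2 : sigma2 B ≤ ρ ^ 2 * ‖B‖)
    (hAgap : sigma2 A < ‖A‖) (hBgap : sigma2 B < ‖B‖)
    (hBA : ‖B.comp A‖ ≥ 4 * ρ * ‖B‖ * ‖A‖)
    (eA eB : EuclideanSpace ℂ (Fin d)) (heA : ‖eA‖ = 1) (heB : ‖eB‖ = 1)
    (hAeA : ‖A eA‖ = ‖A‖) (hBeB : ‖B eB‖ = ‖B‖)
    (w : EuclideanSpace ℂ (Fin d)) (hw : ‖w‖ = 1)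
    (hPw : ρ ≤ ‖(inner ℂ eA w : ℂ)‖) :
    A w ≠ 0 ∧ 2 * ρ ≤ ‖(inner ℂ eB ((‖A w‖)⁻¹ • A w) : ℂ)‖ := by
  have hAn : 0 < ‖A‖ := lt_of_le_of_lt (sigma2_nonneg' A) hAgap
  have hBn : 0 < ‖B‖ := lt_of_le_of_lt (sigma2_nonneg' B) hBgap
  obtain ⟨hAwlow, hAwsq⟩ := L1' A eA heA hAeA w hw
  set s : ℝ := ‖(inner ℂ eA w : ℂ)‖ with hsdef
  have hsρ : ρ ≤ s := hPw
  have hs0 : 0 ≤ s := le_trans (le_of_lt hρ) hsρ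
  have hs1 : s ≤ 1 := by
    have := norm_inner_le_norm (𝕜 := ℂ) eA w
    rw [heA, hw, one_mul] at this
    exact this
  have hρ2 : ρ ^ 2 ≤ ρ / 4 := by nlinarith
  have hρ3 : ρ ^ 3 ≤ ρ / 16 := by nlinarith [mul_le_mul_of_nonneg_left hρ2 (le_of_lt hρ)]
  have hρ4' : ρ ^ 4 ≤ ρ / 64 := by nlinarith [mul_le_mul_of_nonneg_left hρ3 (le_of_lt hρ)]
  -- lower bound for ‖A w‖
  have hAwlow' : s * ‖A‖ - ρ ^ 2 * ‖A‖ ≤ ‖A w‖ := by linarith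
  have hAwpos : 0 < ‖A w‖ := by
    nlinarith [mul_le_mul_of_nonneg_right hsρ (le_of_lt hAn), mul_pos hρ hAn,
      mul_le_mul_of_nonneg_right hρ4 (le_of_lt (mul_pos hρ hAn))]
  have hAwne : A w ≠ 0 := by
    intro h
    rw [h, norm_zero] at hAwpos
    exact lt_irrefl 0 hAwpos
  refine ⟨hAwne, ?_⟩
  -- upper bound for ‖A w‖
  have hAwup : ‖A w‖ ≤ s * (1 + ρ ^ 2 / 2) * ‖A‖ := by
    have h1 : ‖A w‖ ^ 2 ≤ (s * (1 + ρ ^ 2 / 2) * ‖A‖) ^ 2 := by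
      have ha1 : (sigma2 A) ^ 2 ≤ (ρ ^ 2 * ‖A‖) ^ 2 :=
        pow_le_pow_left₀ (sigma2_nonneg' A) hA2 2
      have ha2 : ρ * ρ ≤ s * s := mul_le_mul hsρ hsρ (le_of_lt hρ) hs0
      nlinarith [ha1, ha2, hAwsq, mul_le_mul_of_nonneg_right ha2
        (by positivity : (0:ℝ) ≤ ρ ^ 2 * ‖A‖ ^ 2), sq_nonneg (s * ρ ^ 2 * ‖A‖)]
    nlinarith [h1, norm_nonneg (A w), hAwpos,
      mul_nonneg (mul_nonneg hs0 (by positivity : (0:ℝ) ≤ 1 + ρ ^ 2 / 2)) (norm_nonneg A)]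
  -- lower bound on ‖B (A eA)‖
  have hm : (4 * ρ - ρ ^ 2) * (‖B‖ * ‖A‖) ≤ ‖B (A eA)‖ := by
    have hcomp := L4' A B eA heA hAeA
    have hσ : ‖B‖ * sigma2 A ≤ ρ ^ 2 * ‖B‖ * ‖A‖ := by
      calc ‖B‖ * sigma2 A ≤ ‖B‖ * (ρ ^ 2 * ‖A‖) :=
            mul_le_mul_of_nonneg_left hA2 (norm_nonneg B)
      _ = ρ ^ 2 * ‖B‖ * ‖A‖ := by ring
    nlinarith [hBA, hcomp, hσ]
  -- lower bound on ‖B (A w)‖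
  have hBAw : s * ((4 * ρ - ρ ^ 2) * (‖B‖ * ‖A‖)) - ρ ^ 2 * ‖B‖ * ‖A‖ ≤ ‖B (A w)‖ := by
    have h1 := L2' A B eA heA hAeA w hw
    have h2 : s * ((4 * ρ - ρ ^ 2) * (‖B‖ * ‖A‖)) ≤ s * ‖B (A eA)‖ :=
      mul_le_mul_of_nonneg_left hm hs0
    have h3 : ‖B‖ * sigma2 A ≤ ρ ^ 2 * ‖B‖ * ‖A‖ := by
      calc ‖B‖ * sigma2 A ≤ ‖B‖ * (ρ ^ 2 * ‖A‖) :=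
            mul_le_mul_of_nonneg_left hA2 (norm_nonneg B)
      _ = ρ ^ 2 * ‖B‖ * ‖A‖ := by ring
    linarith
  -- the normalized image vector
  set x : EuclideanSpace ℂ (Fin d) := (‖A w‖)⁻¹ • A w with hxdef
  have hxnorm : ‖x‖ = 1 := by
    rw [hxdef, norm_smul, norm_inv, Real.norm_eq_abs, abs_of_pos hAwpos,
      inv_mul_cancel₀ (ne_of_gt hAwpos)]
  set p : ℝ := ‖(inner ℂ eB x : ℂ)‖ with hpdef
  have hp0 : 0 ≤ p := norm_nonneg _
  have hBx : ‖B x‖ ≤ p * ‖B‖ + ρ ^ 2 * ‖B‖ := by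
    have h1 := L3' B eB heB hBeB x hxnorm
    have h2 : sigma2 B ≤ ρ ^ 2 * ‖B‖ := hB2
    linarith
  have hBxval : ‖B x‖ = ‖A w‖⁻¹ * ‖B (A w)‖ := by
    rw [hxdef]
    have h : B ((‖A w‖)⁻¹ • A w) = (‖A w‖)⁻¹ • B (A w) := B.map_smul_of_tower _ _
    rw [h, norm_smul, norm_inv, Real.norm_eq_abs, abs_of_pos hAwpos]
  -- assemble
  have hkey : s * ((4 * ρ - ρ ^ 2) * (‖B‖ * ‖A‖)) - ρ ^ 2 * ‖B‖ * ‖A‖ ≤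
      (s * (1 + ρ ^ 2 / 2) * ‖A‖) * ((p + ρ ^ 2) * ‖B‖) := by
    have h1 : ‖B (A w)‖ = ‖A w‖ * ‖B x‖ := by
      rw [hBxval]
      field_simp
    have h2 : ‖B (A w)‖ ≤ ‖A w‖ * ((p + ρ ^ 2) * ‖B‖) := by
      rw [h1]
      apply mul_le_mul_of_nonneg_left _ (le_of_lt hAwpos)
      calc ‖B x‖ ≤ p * ‖B‖ + ρ ^ 2 * ‖B‖ := hBx
      _ = (p + ρ ^ 2) * ‖B‖ := by ring
    have h3 : ‖A w‖ * ((p + ρ ^ 2) * ‖B‖) ≤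
        (s * (1 + ρ ^ 2 / 2) * ‖A‖) * ((p + ρ ^ 2) * ‖B‖) := by
      apply mul_le_mul_of_nonneg_right hAwup
      positivity
    linarith
  have hpure : s * (4 * ρ - ρ ^ 2) - ρ ^ 2 ≤ s * (1 + ρ ^ 2 / 2) * (p + ρ ^ 2) := by
    have h4 : (s * (4 * ρ - ρ ^ 2) - ρ ^ 2) * (‖A‖ * ‖B‖) ≤
        (s * (1 + ρ ^ 2 / 2) * (p + ρ ^ 2)) * (‖A‖ * ‖B‖) := by
      nlinarith [hkey]
    exact le_of_mul_le_mul_right h4 (by positivity)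
  show 2 * ρ ≤ p
  by_contra hcon
  push_neg at hcon
  have hK : ρ < 2 * ρ - 2 * ρ ^ 2 - ρ ^ 3 - ρ ^ 4 / 2 := by linarith
  have h5 : s * (1 + ρ ^ 2 / 2) * (p + ρ ^ 2) ≤ s * (1 + ρ ^ 2 / 2) * (2 * ρ + ρ ^ 2) :=
    mul_le_mul_of_nonneg_left (by linarith)
      (mul_nonneg hs0 (by positivity : (0:ℝ) ≤ 1 + ρ ^ 2 / 2))
  have h6 : ρ * (2 * ρ - 2 * ρ ^ 2 - ρ ^ 3 - ρ ^ 4 / 2) ≤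
      s * (2 * ρ - 2 * ρ ^ 2 - ρ ^ 3 - ρ ^ 4 / 2) :=
    mul_le_mul_of_nonneg_right hsρ (le_of_lt (lt_trans hρ hK))
  have h7 : ρ * ρ < ρ * (2 * ρ - 2 * ρ ^ 2 - ρ ^ 3 - ρ ^ 4 / 2) :=
    mul_lt_mul_of_pos_left hK hρ
  nlinarith [hpure, h5, h6, h7]
end

section
/- Let φ_n: I → ℝ be a sequence of convex functions on an interval I and Φ: I → ℝ an affine function. If φ_n(t₀) ≥ Φ(t₀) + o(1) at an interior point t₀, and φ_n(t) ≤ Φ(t) + o(1) uniformly for t in I, then φ_n(t) = Φ(t) + o(1) uniformly on compact subsets of the interior of I. -/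
/-- If convex functions `φ n` on `I = [a,b]` satisfy `φ n t ≤ Φ t + o(1)` uniformly on `I`
for an affine function `Φ`, and `φ n t₀ ≥ Φ t₀ + o(1)` at an interior point `t₀`, then
`φ n = Φ + o(1)` uniformly on compact subsets of the interior of `I`. -/
theorem stmt7 (a b : ℝ) (hab : a < b) (t₀ : ℝ) (ht₀ : t₀ ∈ Set.Ioo a b)
    (φ : ℕ → ℝ → ℝ) (hconv : ∀ n, ConvexOn ℝ (Set.Icc a b) (φ n))
    (m c : ℝ) (Φ : ℝ → ℝ) (hΦ : ∀ t, Φ t = m * t + c)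
    (hlow : ∀ ε > 0, ∃ N, ∀ n ≥ N, Φ t₀ - ε ≤ φ n t₀)
    (hupp : ∀ ε > 0, ∃ N, ∀ n ≥ N, ∀ t ∈ Set.Icc a b, φ n t ≤ Φ t + ε) :
    ∀ K ⊆ Set.Ioo a b, IsCompact K →
      ∀ ε > 0, ∃ N, ∀ n ≥ N, ∀ t ∈ K, |φ n t - Φ t| ≤ ε := by
  intro K hK _ ε hε
  obtain ⟨ha₀, hb₀⟩ := ht₀
  have hba : (0:ℝ) < b - a := by linarith
  set l : ℝ := min (b - t₀) (t₀ - a) / (b - a) with hl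
  have hlpos : 0 < l := div_pos (lt_min (by linarith) (by linarith)) hba
  have hlle : l ≤ 1 := by
    rw [hl, div_le_one hba]
    exact le_trans (min_le_left _ _) (by linarith)
  set ε' : ℝ := ε * l / 2 with hε'def
  have hε' : 0 < ε' := by positivity
  obtain ⟨N₁, hN₁⟩ := hlow ε' hε'
  obtain ⟨N₂, hN₂⟩ := hupp ε' hε'
  refine ⟨max N₁ N₂, fun n hn t ht => ?_⟩
  obtain ⟨hat, htb⟩ := hK ht
  have h1 := hN₁ n (le_trans (le_max_left _ _) hn)
  have h2 := hN₂ n (le_trans (le_max_right _ _) hn)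
  have htI : t ∈ Set.Icc a b := ⟨le_of_lt hat, le_of_lt htb⟩
  have h2t := h2 t htI
  have hεε' : ε' ≤ ε := by nlinarith
  rw [abs_le]
  refine ⟨?_, by linarith⟩
  -- lower bound: Φ t - φ n t ≤ ε
  rcases le_total t t₀ with hc | hc
  · -- use endpoint b
    have hbt : (0:ℝ) < b - t := by linarith
    set L : ℝ := (b - t₀) / (b - t) with hLdef
    set M : ℝ := (t₀ - t) / (b - t) with hMdef
    have hL0 : 0 ≤ L := div_nonneg (by linarith) (le_of_lt hbt)
    have hM0 : 0 ≤ M := div_nonneg (by linarith) (le_of_lt hbt)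
    have hLM : L + M = 1 := by rw [hLdef, hMdef]; field_simp; ring
    have hcomb : L * t + M * b = t₀ := by rw [hLdef, hMdef]; field_simp; ring
    have hcv := (hconv n).2 htI ⟨le_of_lt hab, le_refl b⟩ hL0 hM0 hLM
    simp only [smul_eq_mul, hcomb] at hcv
    have h2b := h2 b ⟨le_of_lt hab, le_refl b⟩
    have haff : Φ t₀ = L * Φ t + M * Φ b := by
      rw [hΦ, hΦ, hΦ, hLdef, hMdef]; field_simp; ring
    have hkey : L * (Φ t - φ n t) ≤ 2 * ε' := by nlinarith
    have hLl : l ≤ L := by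
      rw [hl, hLdef]
      exact div_le_div₀ (by linarith) (min_le_left _ _) hbt (by linarith)
    rcases le_or_gt (Φ t - φ n t) 0 with h0 | h0
    · linarith
    · have h3 : l * (Φ t - φ n t) ≤ L * (Φ t - φ n t) :=
        mul_le_mul_of_nonneg_right hLl (le_of_lt h0)
      have h4 : (2:ℝ) * ε' = l * ε := by rw [hε'def]; ring
      have h5 : l * (Φ t - φ n t) ≤ l * ε := by linarith
      linarith [le_of_mul_le_mul_left h5 hlpos]
  · -- use endpoint a
    have hta : (0:ℝ) < t - a := by linarith
    set L : ℝ := (t₀ - a) / (t - a) with hLdef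
    set M : ℝ := (t - t₀) / (t - a) with hMdef
    have hL0 : 0 ≤ L := div_nonneg (by linarith) (le_of_lt hta)
    have hM0 : 0 ≤ M := div_nonneg (by linarith) (le_of_lt hta)
    have hLM : L + M = 1 := by rw [hLdef, hMdef]; field_simp; ring
    have hcomb : L * t + M * a = t₀ := by rw [hLdef, hMdef]; field_simp; ring
    have hcv := (hconv n).2 htI ⟨le_refl a, le_of_lt hab⟩ hL0 hM0 hLM
    simp only [smul_eq_mul, hcomb] at hcv
    have h2a := h2 a ⟨le_refl a, le_of_lt hab⟩
    have haff : Φ t₀ = L * Φ t + M * Φ a := by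
      rw [hΦ, hΦ, hΦ, hLdef, hMdef]; field_simp; ring
    have hkey : L * (Φ t - φ n t) ≤ 2 * ε' := by nlinarith
    have hLl : l ≤ L := by
      rw [hl, hLdef]
      exact div_le_div₀ (by linarith) (min_le_right _ _) hta (by linarith)
    rcases le_or_gt (Φ t - φ n t) 0 with h0 | h0
    · linarith
    · have h3 : l * (Φ t - φ n t) ≤ L * (Φ t - φ n t) :=
        mul_le_mul_of_nonneg_right hLl (le_of_lt h0)
      have h4 : (2:ℝ) * ε' = l * ε := by rw [hε'def]; ring
      have h5 : l * (Φ t - φ n t) ≤ l * ε := by linarith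
      linarith [le_of_mul_le_mul_left h5 hlpos]
end

section
/- Let u, s be subspaces of ℂ^d with ℂ^d = u ⊕ s, and let P be the projection onto u along s (i.e., ker P = s and P restricted to u is the identity). Then ‖P‖ = 1/sin(θ), where θ is the minimal angle between u and s, defined by sin(θ) = min over unit vectors v ∈ u of the distance from v to s. -/
/-- For complementary subspaces `u ⊕ s = ℂ^d` (with `u ≠ 0`), the projection `P` onto `u`
along `s` (i.e. `ker P = s`, `P|_u = id`) has operator norm `‖P‖ = 1/sin θ`, where the
minimal angle `θ` satisfies `sin θ = inf{‖v - w‖ : v ∈ u, ‖v‖ = 1, w ∈ s}`. -/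
theorem stmt9 {d : ℕ} (u s : Submodule ℂ (EuclideanSpace ℂ (Fin d)))
    (hcompl : IsCompl u s) (hu : u ≠ ⊥)
    (P : EuclideanSpace ℂ (Fin d) →L[ℂ] EuclideanSpace ℂ (Fin d))
    (hPs : ∀ x ∈ s, P x = 0) (hPu : ∀ x ∈ u, P x = x) :
    ‖P‖ = 1 / sInf {r : ℝ | ∃ v ∈ u, ‖v‖ = 1 ∧ ∃ w ∈ s, r = ‖v - w‖} := by
  set S : Set ℝ := {r : ℝ | ∃ v ∈ u, ‖v‖ = 1 ∧ ∃ w ∈ s, r = ‖v - w‖} with hSdef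
  -- a unit vector in u
  obtain ⟨v0, hv0u, hv0⟩ := Submodule.exists_mem_ne_zero_of_ne_bot hu
  have hv0n : (0:ℝ) < ‖v0‖ := norm_pos_iff.mpr hv0
  set e : EuclideanSpace ℂ (Fin d) := ((‖v0‖⁻¹ : ℝ) : ℂ) • v0 with hedef
  have heu : e ∈ u := u.smul_mem _ hv0u
  have he : ‖e‖ = 1 := by
    rw [hedef, norm_smul, Complex.norm_real, Real.norm_eq_abs,
      abs_of_nonneg (inv_nonneg.mpr hv0n.le), inv_mul_cancel₀ hv0n.ne']
  have hSne : S.Nonempty := ⟨1, e, heu, he, 0, s.zero_mem, by simp [he]⟩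
  have hP1 : (1:ℝ) ≤ ‖P‖ := by
    have h := P.le_opNorm e
    rw [hPu e heu, he, mul_one] at h
    exact h
  have hP0 : (0:ℝ) < ‖P‖ := lt_of_lt_of_le one_pos hP1
  have hlb : ∀ r ∈ S, ‖P‖⁻¹ ≤ r := by
    rintro r ⟨v, hv, hv1, w, hw, rfl⟩
    have hPv : P (v - w) = v := by
      rw [map_sub, hPu v hv, hPs w hw, sub_zero]
    have h2 : 1 ≤ ‖P‖ * ‖v - w‖ := by
      have h := P.le_opNorm (v - w)
      rwa [hPv, hv1] at h
    nlinarith [inv_mul_cancel₀ hP0.ne', hP0]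
  have hbdd : BddBelow S := ⟨‖P‖⁻¹, hlb⟩
  have hc : ‖P‖⁻¹ ≤ sInf S := le_csInf hSne hlb
  have hc0 : (0:ℝ) < sInf S := lt_of_lt_of_le (inv_pos.mpr hP0) hc
  have hupper : ‖P‖ ≤ 1 / sInf S := by
    refine P.opNorm_le_bound (by positivity) fun x => ?_
    have hx : x ∈ u ⊔ s := by rw [hcompl.sup_eq_top]; trivial
    obtain ⟨y, hy, z, hz, rfl⟩ := Submodule.mem_sup.mp hx
    have hPx : P (y + z) = y := by rw [map_add, hPu y hy, hPs z hz, add_zero]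
    rw [hPx]
    by_cases hy0 : y = 0
    · simp only [hy0, norm_zero]
      positivity
    · have hyn : (0:ℝ) < ‖y‖ := norm_pos_iff.mpr hy0
      have hmem : ‖y‖⁻¹ * ‖y + z‖ ∈ S := by
        refine ⟨((‖y‖⁻¹ : ℝ) : ℂ) • y, u.smul_mem _ hy, ?_,
          -(((‖y‖⁻¹ : ℝ) : ℂ) • z), s.neg_mem (s.smul_mem _ hz), ?_⟩
        · rw [norm_smul, Complex.norm_real, Real.norm_eq_abs,
            abs_of_nonneg (inv_nonneg.mpr hyn.le), inv_mul_cancel₀ hyn.ne']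
        · rw [sub_neg_eq_add, ← smul_add, norm_smul, Complex.norm_real,
            Real.norm_eq_abs, abs_of_nonneg (inv_nonneg.mpr hyn.le)]
      have hle : sInf S ≤ ‖y‖⁻¹ * ‖y + z‖ := csInf_le hbdd hmem
      rw [div_mul_eq_mul_div, le_div_iff₀ hc0, one_mul]
      nlinarith [inv_mul_cancel₀ hyn.ne', mul_le_mul_of_nonneg_left hle hyn.le, norm_nonneg (y + z)]
  have hlower : 1 / sInf S ≤ ‖P‖ := by
    rw [div_le_iff₀ hc0]
    nlinarith [inv_mul_cancel₀ hP0.ne']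
  exact le_antisymm hupper hlower
end

section
/- Let u: ℝ/ℤ → ℙℂ^d be a continuous (real-analytic) map. Then there exists a vector v ∈ ℂ^d such that v is not orthogonal to u(x) for any x ∈ ℝ/ℤ; i.e., for every x, ⟨v, w⟩ ≠ 0 for nonzero w representing u(x). -/
open MeasureTheory Set Filter

lemma curve_image_null {s : Set ℂ} (q : ℝ → ℂ)
    (hq : ∀ z ∈ s, DifferentiableAt ℝ q (Complex.re z)) :
    volume ((fun z => q z.re) '' s) = 0 := by
  set f' : ℂ → ℂ →L[ℝ] ℂ := fun z =>
    ((1 : ℝ →L[ℝ] ℝ).smulRight (deriv q z.re)).comp Complex.reCLM with hf'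
  have hder : ∀ z ∈ s, HasFDerivWithinAt (fun z : ℂ => q z.re) (f' z) s z := by
    intro z hz
    have h1 : HasFDerivAt q ((1 : ℝ →L[ℝ] ℝ).smulRight (deriv q z.re)) z.re :=
      (hq z hz).hasDerivAt.hasFDerivAt
    have h2 : HasFDerivAt (fun w : ℂ => w.re) (Complex.reCLM) z :=
      Complex.reCLM.hasFDerivAt
    exact (h1.comp z h2).hasFDerivWithinAt
  have hdet : ∀ z ∈ s, (f' z).det = 0 := by
    intro z _
    have hI : f' z Complex.I = 0 := by simp [hf']
    show LinearMap.det ((f' z) : ℂ →ₗ[ℝ] ℂ) = 0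
    rw [← LinearMap.det_toMatrix Complex.basisOneI]
    apply Matrix.det_eq_zero_of_column_eq_zero 1
    intro i
    simp [LinearMap.toMatrix_apply, hI]
  exact addHaar_image_eq_zero_of_det_fderivWithin_eq_zero volume hder hdet

lemma exists_not_orthogonal {d : ℕ} (S : Finset (EuclideanSpace ℂ (Fin d))) :
    ∃ w : EuclideanSpace ℂ (Fin d), ∀ z ∈ S, z ≠ 0 → (inner ℂ w z : ℂ) ≠ 0 := by
  classical
  induction S using Finset.induction_on with
  | empty => exact ⟨0, by simp⟩
  | insert z S hzS ih =>
    obtain ⟨w, hw⟩ := ih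
    by_cases hz : z = 0
    · refine ⟨w, ?_⟩
      intro y hy hy0
      rcases Finset.mem_insert.mp hy with rfl | hyS
      · exact absurd hz hy0
      · exact hw y hyS hy0
    · obtain ⟨c, hc⟩ := Infinite.exists_notMem_finset
        ((insert z S).image fun y => -(inner ℂ w y : ℂ) / (inner ℂ z y : ℂ))
      refine ⟨w + (starRingEnd ℂ c) • z, ?_⟩
      intro y hy hy0
      have hinner : (inner ℂ (w + (starRingEnd ℂ c) • z) y : ℂ)
          = (inner ℂ w y : ℂ) + c * (inner ℂ z y : ℂ) := by
        rw [inner_add_left, inner_smul_left]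
        simp
      rw [hinner]
      by_cases hzy : (inner ℂ z y : ℂ) = 0
      · rw [hzy, mul_zero, add_zero]
        rcases Finset.mem_insert.mp hy with rfl | hyS
        · exact absurd (inner_self_eq_zero.mp hzy) hy0
        · exact hw y hyS hy0
      · intro hcon
        apply hc
        refine Finset.mem_image.mpr ⟨y, hy, ?_⟩
        refine (div_eq_iff hzy).mpr ?_
        linear_combination -hcon

/-- Let `u : ℝ/ℤ → ℙℂ^d` be a real-analytic map, represented by a one-periodic
real-analytic nowhere-vanishing map `u : ℝ → ℂ^d \ {0}`.  Then there exists a vector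
`v ∈ ℂ^d` which is not orthogonal to the line `u(x)` for any `x`. -/
theorem stmt10 {d : ℕ} (u : ℝ → EuclideanSpace ℂ (Fin d))
    (hper : ∀ x, u (x + 1) = u x) (hnz : ∀ x, u x ≠ 0)
    (hanal : ∀ x, AnalyticAt ℝ u x) :
    ∃ v : EuclideanSpace ℂ (Fin d), ∀ x, (inner ℂ v (u x) : ℂ) ≠ 0 := by
  classical
  have hPer : Function.Periodic u 1 := hper
  have hfrac : ∀ x : ℝ, u (Int.fract x) = u x := by
    intro x
    have h := hPer.sub_zsmul_eq (x := x) ⌊x⌋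
    rw [zsmul_eq_mul, mul_one] at h
    rw [Int.fract]
    exact h
  set v₀ := u 0 with hv₀
  have hanal' : ∀ (v : EuclideanSpace ℂ (Fin d)) (x : ℝ),
      AnalyticAt ℝ (fun t => (inner ℂ v (u t) : ℂ)) x := by
    intro v x
    exact (((innerSL ℂ v).restrictScalars ℝ).analyticAt _).comp (hanal x)
  set f : ℝ → ℂ := fun x => inner ℂ v₀ (u x) with hf
  have hf0 : f 0 ≠ 0 := by
    show (inner ℂ v₀ (u 0) : ℂ) ≠ 0
    rw [hv₀]
    exact inner_self_ne_zero.mpr (hnz 0)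
  -- finiteness of the zero set of f in [0,1)
  have hZ : {x ∈ Set.Ico (0:ℝ) 1 | f x = 0}.Finite := by
    by_contra hinf
    replace hinf : {x ∈ Set.Ico (0:ℝ) 1 | f x = 0}.Infinite := hinf
    obtain ⟨a, -, hacc⟩ := hinf.exists_accPt_of_subset_isCompact isCompact_Icc
      (fun x hx => Set.Ico_subset_Icc_self hx.1)
    have hfreq : ∃ᶠ x in nhdsWithin a {a}ᶜ, f x = 0 := by
      have h1 := accPt_iff_frequently.mp hacc
      rw [frequently_nhdsWithin_iff]
      exact h1.mono (fun y hy => ⟨hy.2.2, hy.1⟩)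
    rcases (hanal' v₀ a).eventually_eq_zero_or_eventually_ne_zero with hev | hne
    · have hall : Set.EqOn f 0 Set.univ :=
        AnalyticOnNhd.eqOn_zero_of_preconnected_of_eventuallyEq_zero
          (fun x _ => hanal' v₀ x) isPreconnected_univ (Set.mem_univ a) hev
      exact hf0 (hall (Set.mem_univ 0))
    · rcases (hfreq.and_eventually hne).exists with ⟨x, hx1, hx2⟩
      exact hx2 hx1
  obtain ⟨w, hw⟩ := exists_not_orthogonal (hZ.toFinset.image u)
  set g : ℝ → ℂ := fun x => inner ℂ w (u x) with hg
  have hkey : ∀ x, f x = 0 → g x ≠ 0 := by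
    intro x hfx
    have hy : Int.fract x ∈ Set.Ico (0:ℝ) 1 := ⟨Int.fract_nonneg x, Int.fract_lt_one x⟩
    have hfy : f (Int.fract x) = 0 := by
      show (inner ℂ v₀ (u (Int.fract x)) : ℂ) = 0
      rw [hfrac x]
      exact hfx
    have hmem : u (Int.fract x) ∈ hZ.toFinset.image u :=
      Finset.mem_image.mpr ⟨Int.fract x, hZ.mem_toFinset.mpr ⟨hy, hfy⟩, rfl⟩
    have h2 := hw (u (Int.fract x)) hmem (hnz _)
    show (inner ℂ w (u x) : ℂ) ≠ 0
    rw [← hfrac x]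
    exact h2
  -- the bad set of ε has measure zero
  set s : Set ℂ := {z : ℂ | g z.re ≠ 0} with hs
  have hq : ∀ z ∈ s, DifferentiableAt ℝ (fun x => -f x / g x) (Complex.re z) := by
    intro z hz
    exact ((hanal' v₀ z.re).differentiableAt.neg).div
      (hanal' w z.re).differentiableAt hz
  have hnull := curve_image_null (fun x => -f x / g x) hq
  obtain ⟨ε, hε⟩ : ∃ ε : ℂ, ε ∉ (fun z : ℂ => -f z.re / g z.re) '' s := by
    by_contra h
    push_neg at h
    have huniv : (fun z : ℂ => -f z.re / g z.re) '' s = Set.univ :=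
      Set.eq_univ_of_forall h
    rw [huniv] at hnull
    exact (isOpen_univ.measure_ne_zero volume Set.univ_nonempty) hnull
  refine ⟨v₀ + (starRingEnd ℂ ε) • w, ?_⟩
  intro x
  have hval : (inner ℂ (v₀ + (starRingEnd ℂ ε) • w) (u x) : ℂ) = f x + ε * g x := by
    rw [inner_add_left, inner_smul_left, Complex.conj_conj]
  rw [hval]
  intro hcon
  by_cases hgx : g x = 0
  · exact hkey x (by simpa [hgx] using hcon) hgx
  · apply hε
    refine ⟨(x : ℂ), ?_, ?_⟩
    · show g ((x : ℂ)).re ≠ 0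
      simpa using hgx
    · show -f ((x : ℂ)).re / g ((x : ℂ)).re = ε
      rw [Complex.ofReal_re]
      refine (div_eq_iff hgx).mpr ?_
      linear_combination -hcon
end

section
/- Let α be irrational with continued fraction approximant p/q and previous denominator q'. Then for any x, y ∈ ℝ/ℤ, the set {y + kα mod 1 : 0 ≤ k ≤ q + q' − 1} is (1/q)-dense in ℝ/ℤ, i.e., every point of ℝ/ℤ is within distance 1/q of some point y + kα. -/
open GenContFract

private lemma my_not_term (α : ℝ) (hα : Irrational α) (m : ℕ) : ¬(GenContFract.of α).TerminatedAt m := by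
  intro h
  obtain ⟨r, hr⟩ := (terminates_iff_rat α).mp ⟨m, h⟩
  exact hα ⟨r, hr.symm⟩

private lemma my_int (α : ℝ) (hα : Irrational α) :
    ∀ m : ℕ, (∃ a : ℤ, ((GenContFract.of α).contsAux m).a = (a : ℝ)) ∧
      (∃ b : ℤ, ((GenContFract.of α).contsAux m).b = (b : ℝ)) := by
  intro m
  induction m using Nat.strong_induction_on with
  | _ m ih =>
  match m with
  | 0 => exact ⟨⟨1, by simp [zeroth_contAux_eq_one_zero]⟩,
      ⟨0, by simp [zeroth_contAux_eq_one_zero]⟩⟩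
  | 1 => exact ⟨⟨⌊α⌋, by simp [first_contAux_eq_h_one, of_h_eq_floor]⟩,
      ⟨1, by simp [first_contAux_eq_h_one]⟩⟩
  | (m+2) =>
    obtain ⟨gp, hgp⟩ := Option.ne_none_iff_exists'.1 (my_not_term α hα m)
    obtain ⟨ha1, z, hz⟩ := of_partNum_eq_one_and_exists_int_partDen_eq hgp
    have hrec := contsAux_recurrence hgp rfl rfl
    obtain ⟨⟨a0, ha0⟩, ⟨b0, hb0⟩⟩ := ih m (by omega)
    obtain ⟨⟨a1, ha1'⟩, ⟨b1, hb1'⟩⟩ := ih (m+1) (by omega)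
    constructor
    · exact ⟨z * a1 + a0, by rw [hrec]; push_cast; simp [ha1, hz, ha0, ha1']⟩
    · exact ⟨z * b1 + b0, by rw [hrec]; push_cast; simp [ha1, hz, hb0, hb1']⟩

/-- Let `α` be irrational with continued fraction convergent denominators `q' = q_n` and
`q = q_{n+1}`.  Then for every `y`, the orbit points `y + kα`, `0 ≤ k ≤ q + q' - 1`, are
`(1/q)`-dense in `ℝ/ℤ`: every real `z` is within distance `1/q` of some `y + kα` modulo 1. -/
theorem stmt13 (α : ℝ) (hα : Irrational α) (n : ℕ) (q q' : ℝ)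
    (hq : q = (GenContFract.of α).dens (n + 1))
    (hq' : q' = (GenContFract.of α).dens n)
    (y : ℝ) :
    ∀ z : ℝ, ∃ k : ℕ, (k : ℝ) ≤ q + q' - 1 ∧
      ∃ j : ℤ, |z - (y + (k : ℝ) * α) - (j : ℝ)| ≤ 1 / q := by
  intro z
  set g := GenContFract.of α with hg
  obtain ⟨⟨P, hP⟩, ⟨Q, hQ⟩⟩ := my_int α hα (n + 2)
  obtain ⟨⟨P', hP'⟩, ⟨Q', hQ'⟩⟩ := my_int α hα (n + 1)
  have hdenQ : g.dens (n + 1) = (Q : ℝ) := by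
    rw [GenContFract.den_eq_conts_b, GenContFract.nth_cont_eq_succ_nth_contAux]; exact hQ
  have hnumP : g.nums (n + 1) = (P : ℝ) := by
    rw [GenContFract.num_eq_conts_a, GenContFract.nth_cont_eq_succ_nth_contAux]; exact hP
  have hdenQ' : g.dens n = (Q' : ℝ) := by
    rw [GenContFract.den_eq_conts_b, GenContFract.nth_cont_eq_succ_nth_contAux]; exact hQ'
  have hnumP' : g.nums n = (P' : ℝ) := by
    rw [GenContFract.num_eq_conts_a, GenContFract.nth_cont_eq_succ_nth_contAux]; exact hP'
  have hfib : ((Nat.fib (n + 2) : ℕ) : ℝ) ≤ g.dens (n + 1) :=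
    GenContFract.succ_nth_fib_le_of_nth_den (Or.inr (my_not_term α hα _))
  have hfib' : ((Nat.fib (n + 1) : ℕ) : ℝ) ≤ g.dens n := by
    cases n with
    | zero => exact GenContFract.succ_nth_fib_le_of_nth_den (Or.inl rfl)
    | succ m => exact GenContFract.succ_nth_fib_le_of_nth_den (Or.inr (my_not_term α hα _))
  have hQ1 : (1 : ℝ) ≤ (Q : ℝ) := by
    rw [← hdenQ]
    refine le_trans ?_ hfib
    exact_mod_cast Nat.one_le_iff_ne_zero.mpr (Nat.fib_pos.mpr (by omega)).ne'
  have hQ'1 : (1 : ℝ) ≤ (Q' : ℝ) := by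
    rw [← hdenQ']
    refine le_trans ?_ hfib'
    exact_mod_cast Nat.one_le_iff_ne_zero.mpr (Nat.fib_pos.mpr (by omega)).ne'
  have hQpos : (0 : ℝ) < (Q : ℝ) := lt_of_lt_of_le one_pos hQ1
  have hQne : (Q : ℝ) ≠ 0 := ne_of_gt hQpos
  have hQZ1 : (1 : ℤ) ≤ Q := by exact_mod_cast hQ1
  have hdet : g.nums n * g.dens (n + 1) - g.dens n * g.nums (n + 1) = (-1 : ℝ) ^ (n + 1) := by
    exact SimpContFract.determinant (K := ℝ)
      (s := ⟨GenContFract.of α, GenContFract.of_isSimpContFract α⟩)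
      (n := n) (my_not_term α hα n)
  have hdetZ : P' * Q - Q' * P = (-1 : ℤ) ^ (n + 1) := by
    have : ((P' * Q - Q' * P : ℤ) : ℝ) = (((-1 : ℤ) ^ (n + 1) : ℤ) : ℝ) := by
      push_cast
      rw [← hnumP', ← hdenQ, ← hdenQ', ← hnumP]
      exact_mod_cast hdet
    exact_mod_cast this
  obtain ⟨u, v, huv⟩ : ∃ u v : ℤ, u * P + v * Q = 1 := by
    refine ⟨-Q' * (-1) ^ (n + 1), P' * (-1) ^ (n + 1), ?_⟩
    have h2 : ((-1 : ℤ) ^ (n + 1)) * ((-1 : ℤ) ^ (n + 1)) = 1 := by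
      rw [← pow_add]
      exact Even.neg_one_pow ⟨n + 1, by ring⟩
    calc -Q' * (-1) ^ (n + 1) * P + P' * (-1) ^ (n + 1) * Q
        = (P' * Q - Q' * P) * (-1) ^ (n + 1) := by ring
      _ = 1 := by rw [hdetZ, h2]
  have happrox : |(Q : ℝ) * α - P| ≤ 1 / Q := by
    have h1 := GenContFract.abs_sub_convs_le (v := α) (n := n + 1) (my_not_term α hα _)
    rw [GenContFract.conv_eq_num_div_den, hnumP, hdenQ] at h1
    have hd2 : (Q : ℝ) ≤ (GenContFract.of α).dens (n + 1 + 1) := by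
      rw [← hdenQ]; exact GenContFract.of_den_mono (v := α) (n := n + 1)
    have h2 : |α - P / Q| ≤ 1 / (Q * Q) := by
      refine h1.trans ?_
      apply one_div_le_one_div_of_le (by positivity)
      exact mul_le_mul_of_nonneg_left hd2 (le_of_lt hQpos)
    have hprod : (Q : ℝ) * (α - P / Q) = Q * α - P := by field_simp
    calc |(Q : ℝ) * α - P| = |(Q : ℝ) * (α - P / Q)| := by rw [hprod]
      _ = (Q : ℝ) * |α - P / Q| := by rw [abs_mul, abs_of_pos hQpos]
      _ ≤ (Q : ℝ) * (1 / (Q * Q)) := mul_le_mul_of_nonneg_left h2 (le_of_lt hQpos)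
      _ = 1 / Q := by field_simp
  set ε := (Q : ℝ) * α - P with hεdef
  set t := z - y with ht
  set m : ℤ := if 0 ≤ ε then ⌊(Q : ℝ) * t⌋ else ⌈(Q : ℝ) * t⌉ with hm
  set k' : ℤ := (m * u) % Q with hk'
  have hk'0 : 0 ≤ k' := Int.emod_nonneg _ (by omega)
  have hk'Q : k' < Q := Int.emod_lt_of_pos _ (by omega)
  set k : ℕ := k'.toNat with hk
  have hkk' : (k : ℤ) = k' := Int.toNat_of_nonneg hk'0
  have hkR : (k : ℝ) = (k' : ℝ) := by exact_mod_cast congrArg (Int.cast : ℤ → ℝ) hkk'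
  have hdvd : (Q : ℤ) ∣ (k' * P - m) := by
    have h1 : k' % Q = (m * u) % Q := by rw [hk']; simp [Int.emod_emod_of_dvd]
    have h2 : (k' * P) % Q = (m * u * P) % Q := Int.ModEq.mul_right P h1
    have h3 : m * u * P = m - m * v * Q := by
      have huP : u * P = 1 - v * Q := by linarith [huv]
      calc m * u * P = m * (u * P) := by ring
        _ = m * (1 - v * Q) := by rw [huP]
        _ = m - m * v * Q := by ring
    have h4 : (k' * P) % Q = m % Q := by
      rw [h2, h3]
      exact Int.ModEq.symm (Int.modEq_iff_dvd.mpr ⟨-(m * v), by ring⟩)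
    exact Int.ModEq.dvd (Int.ModEq.symm h4)
  obtain ⟨c, hc⟩ := hdvd
  clear_value ε t m k' k
  refine ⟨k, ?_, -c, ?_⟩
  · rw [hq, hq', hdenQ, hdenQ', hkR]
    have h1 : (k' : ℝ) ≤ (Q : ℝ) - 1 := by
      have : k' ≤ Q - 1 := by omega
      exact_mod_cast this
    linarith
  · rw [hq, hdenQ]
    have hkPZ : k' * P = m + Q * c := by linarith [hc]
    have hkP : (k : ℝ) * P = m + Q * c := by
      rw [hkR]; exact_mod_cast congrArg (Int.cast : ℤ → ℝ) hkPZ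
    have hkQR : (k : ℝ) ≤ Q := by rw [hkR]; exact_mod_cast le_of_lt hk'Q
    have hk0R : (0 : ℝ) ≤ (k : ℝ) := Nat.cast_nonneg k
    have hexpand : z - (y + (k : ℝ) * α) - ((-c : ℤ) : ℝ) =
        ((Q : ℝ) * t - m) / Q - (k : ℝ) * ε / Q := by
      have hα_eq : α = ((P : ℝ) + ε) / Q := by rw [hεdef]; field_simp; ring
      rw [hα_eq]
      push_cast
      rw [ht]
      field_simp
      linear_combination -hkP
    rw [hexpand]
    have hQinv : (Q : ℝ) * (1 / Q) = 1 := by field_simp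
    have hεlo : -(1 / (Q : ℝ)) ≤ ε := (abs_le.mp happrox).1
    have hεhi : ε ≤ 1 / (Q : ℝ) := (abs_le.mp happrox).2
    by_cases hsign : 0 ≤ ε
    · have hmfl : m = ⌊(Q : ℝ) * t⌋ := by rw [hm, if_pos hsign]
      have hfl := Int.floor_le ((Q : ℝ) * t)
      have hfl2 := Int.lt_floor_add_one ((Q : ℝ) * t)
      rw [← hmfl] at hfl hfl2
      have hδ0 : (0 : ℝ) ≤ ((Q : ℝ) * t - m) / Q := div_nonneg (by linarith) (le_of_lt hQpos)
      have hδ1 : ((Q : ℝ) * t - m) / Q ≤ 1 / Q :=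
        (div_le_div_iff_of_pos_right hQpos).mpr (by linarith)
      have ho0 : (0 : ℝ) ≤ (k : ℝ) * ε / Q := div_nonneg (mul_nonneg hk0R hsign) (le_of_lt hQpos)
      have ho1 : (k : ℝ) * ε / Q ≤ 1 / Q := by
        refine (div_le_div_iff_of_pos_right hQpos).mpr ?_
        have h1 : (k : ℝ) * ε ≤ (Q : ℝ) * ε := mul_le_mul_of_nonneg_right hkQR hsign
        have h2 : (Q : ℝ) * ε ≤ (Q : ℝ) * (1 / Q) := mul_le_mul_of_nonneg_left hεhi (le_of_lt hQpos)
        linarith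
      rw [abs_le]
      constructor <;> linarith
    · push_neg at hsign
      have hmcl : m = ⌈(Q : ℝ) * t⌉ := by rw [hm, if_neg (not_le.mpr hsign)]
      have hcl := Int.le_ceil ((Q : ℝ) * t)
      have hcl2 := Int.ceil_lt_add_one ((Q : ℝ) * t)
      rw [← hmcl] at hcl hcl2
      have hδ0 : ((Q : ℝ) * t - m) / Q ≤ 0 :=
        div_nonpos_of_nonpos_of_nonneg (by linarith) (le_of_lt hQpos)
      have hδ1 : -(1 / (Q : ℝ)) ≤ ((Q : ℝ) * t - m) / Q := by
        rw [← neg_div]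
        exact (div_le_div_iff_of_pos_right hQpos).mpr (by linarith)
      have ho0 : (k : ℝ) * ε / Q ≤ 0 :=
        div_nonpos_of_nonpos_of_nonneg
          (mul_nonpos_of_nonneg_of_nonpos hk0R (le_of_lt hsign)) (le_of_lt hQpos)
      have ho1 : -(1 / (Q : ℝ)) ≤ (k : ℝ) * ε / Q := by
        rw [← neg_div]
        refine (div_le_div_iff_of_pos_right hQpos).mpr ?_
        have h1 : (Q : ℝ) * ε ≤ (k : ℝ) * ε := mul_le_mul_of_nonpos_right hkQR (le_of_lt hsign)
        have h2 : (Q : ℝ) * (-(1 / Q)) ≤ (Q : ℝ) * ε := mul_le_mul_of_nonneg_left hεlo (le_of_lt hQpos)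
        have h3 : (Q : ℝ) * (-(1 / Q)) = -1 := by field_simp
        linarith
      rw [abs_le]
      constructor <;> linarith
end

section
/- Let L^k: X → [−∞, ∞) for k = 0, 1, ..., d be functions on a topological space X with L^0 = 0, and set L_k = L^k − L^{k−1}. Fix a point p ∈ X and indices 1 ≤ a ≤ b ≤ d. Assume: L^{a−1} and L^b are continuous at p; L^j is upper semicontinuous at p for all j; L_a ≥ L_j ≥ L_b pointwise on X for a ≤ j ≤ b; and L_a(p) = L_b(p) > −∞. Then L_j is continuous at p for every a ≤ j ≤ b. -/
open Filter Topology

/-- Abstract interpolation argument for continuity of individual Lyapunov exponents: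
`Lsum k = L^k : X → [-∞, ∞)` with `L^0 = 0`, `L_k := L^k - L^{k-1}`.  If `L^{a-1}` and
`L^b` are continuous at `p`, all `L^j` are upper semicontinuous at `p`,
`L_a ≥ L_j ≥ L_b` pointwise for `a ≤ j ≤ b`, and `L_a(p) = L_b(p) > -∞`, then `L_j` is
continuous at `p` for every `a ≤ j ≤ b`. -/
theorem stmt15 {X : Type*} [TopologicalSpace X] (d : ℕ)
    (Lsum : ℕ → X → EReal) (hL0 : ∀ x, Lsum 0 x = 0)
    (htop : ∀ k ≤ d, ∀ x, Lsum k x ≠ ⊤)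
    (p : X) (a b : ℕ) (ha : 1 ≤ a) (hab : a ≤ b) (hbd : b ≤ d)
    (hca : ContinuousAt (Lsum (a - 1)) p) (hcb : ContinuousAt (Lsum b) p)
    (husc : ∀ j ≤ d, UpperSemicontinuousAt (Lsum j) p)
    (hmono : ∀ j, a ≤ j → j ≤ b → ∀ x : X,
      Lsum b x - Lsum (b - 1) x ≤ Lsum j x - Lsum (j - 1) x ∧
      Lsum j x - Lsum (j - 1) x ≤ Lsum a x - Lsum (a - 1) x)
    (heq : Lsum a p - Lsum (a - 1) p = Lsum b p - Lsum (b - 1) p)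
    (hfin : Lsum a p - Lsum (a - 1) p ≠ ⊥) :
    ∀ j, a ≤ j → j ≤ b → ContinuousAt (fun x => Lsum j x - Lsum (j - 1) x) p := by
  set c : EReal := Lsum a p - Lsum (a - 1) p with hc
  have had : a ≤ d := hab.trans hbd
  have hat : Lsum a p ≠ ⊤ := htop a had p
  have ha1t : Lsum (a - 1) p ≠ ⊤ := htop (a - 1) ((Nat.sub_le a 1).trans had) p
  have hbt : Lsum b p ≠ ⊤ := htop b hbd p
  have hb1t : Lsum (b - 1) p ≠ ⊤ := htop (b - 1) ((Nat.sub_le b 1).trans hbd) p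
  have hbp_ne_bot : Lsum b p ≠ ⊥ := by
    intro h
    exact hfin (by rw [heq, h, EReal.bot_sub])
  -- upper bound : limsup of `L_a` at `p` is at most `c`
  have claimU : limsup (fun x => Lsum a x - Lsum (a - 1) x) (𝓝 p) ≤ c := by
    by_cases hb1 : Lsum (a - 1) p = ⊥
    · have hap_ne_bot : Lsum a p ≠ ⊥ := by
        intro h
        exact hfin (by rw [hc, h, EReal.bot_sub])
      have : c = ⊤ := by rw [hc, hb1, EReal.sub_bot hap_ne_bot]
      simp [this]
    · have hgt : Tendsto (Lsum (a - 1)) (𝓝 p) (𝓝 (Lsum (a - 1) p)) := hca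
      have hneg : limsup (fun x => -Lsum (a - 1) x) (𝓝 p) = -(Lsum (a - 1) p) := by
        rw [show (fun x => -Lsum (a - 1) x) = -(Lsum (a - 1)) from rfl,
          EReal.limsup_neg, hgt.liminf_eq]
      have husup : limsup (Lsum a) (𝓝 p) ≤ Lsum a p := (husc a had).limsup_le
      have h1 : limsup (fun x => Lsum a x + (-(Lsum (a - 1) x))) (𝓝 p) ≤
          limsup (Lsum a) (𝓝 p) + limsup (fun x => -Lsum (a - 1) x) (𝓝 p) := by
        apply EReal.limsup_add_le
        · right; rw [hneg]; simp [hb1]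
        · left; exact fun h => hat (top_le_iff.1 (h ▸ husup))
      have h2 : limsup (Lsum a) (𝓝 p) + limsup (fun x => -Lsum (a - 1) x) (𝓝 p) ≤
          Lsum a p + (-(Lsum (a - 1) p)) := add_le_add husup hneg.le
      calc limsup (fun x => Lsum a x - Lsum (a - 1) x) (𝓝 p)
          = limsup (fun x => Lsum a x + (-(Lsum (a - 1) x))) (𝓝 p) := by
            simp_rw [sub_eq_add_neg]
        _ ≤ Lsum a p + (-(Lsum (a - 1) p)) := h1.trans h2
        _ = c := (sub_eq_add_neg _ _).symm
  -- lower bound : liminf of `L_b` at `p` is at least `c`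
  have claimL : c ≤ liminf (fun x => Lsum b x - Lsum (b - 1) x) (𝓝 p) := by
    by_cases hb1 : Lsum (b - 1) p = ⊥
    · -- here `c = ⊤` and `L_b → ⊤`
      have hten : Tendsto (Lsum (b - 1)) (𝓝 p) (𝓝 (⊥ : EReal)) := by
        apply tendsto_of_le_liminf_of_limsup_le bot_le
        exact le_of_le_of_eq (husc (b - 1) ((Nat.sub_le b 1).trans hbd)).limsup_le hb1
      have hpair : Tendsto (fun x => (Lsum b x, -Lsum (b - 1) x)) (𝓝 p)
          (𝓝 (Lsum b p, (⊤ : EReal))) := by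
        refine (hcb.tendsto.prodMk_nhds ?_)
        simpa using hten.neg
      have hadd : Tendsto (fun x => Lsum b x + (-(Lsum (b - 1) x))) (𝓝 p)
          (𝓝 (Lsum b p + ⊤)) := by
        exact (EReal.continuousAt_add (by simp) (Or.inl hbp_ne_bot)).tendsto.comp hpair
      rw [EReal.add_top_of_ne_bot hbp_ne_bot] at hadd
      have : Tendsto (fun x => Lsum b x - Lsum (b - 1) x) (𝓝 p) (𝓝 (⊤ : EReal)) := by
        simpa [sub_eq_add_neg] using hadd
      rw [this.liminf_eq]
      exact le_top
    · have hliminf : liminf (Lsum b) (𝓝 p) = Lsum b p := hcb.tendsto.liminf_eq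
      have hneg : -(Lsum (b - 1) p) ≤ liminf (fun x => -Lsum (b - 1) x) (𝓝 p) := by
        rw [show (fun x => -Lsum (b - 1) x) = -(Lsum (b - 1)) from rfl, EReal.liminf_neg]
        exact EReal.neg_le_neg_iff.2 (husc (b - 1) ((Nat.sub_le b 1).trans hbd)).limsup_le
      calc c = Lsum b p + (-(Lsum (b - 1) p)) := by rw [heq, sub_eq_add_neg]
        _ ≤ liminf (Lsum b) (𝓝 p) + liminf (fun x => -Lsum (b - 1) x) (𝓝 p) :=
            add_le_add hliminf.ge hneg
        _ ≤ liminf (fun x => Lsum b x + (-(Lsum (b - 1) x))) (𝓝 p) := EReal.le_liminf_add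
        _ = liminf (fun x => Lsum b x - Lsum (b - 1) x) (𝓝 p) := by
            simp_rw [sub_eq_add_neg]
  -- conclusion for each `j`
  intro j hja hjb
  have hLjp : Lsum j p - Lsum (j - 1) p = c := by
    refine le_antisymm (hmono j hja hjb p).2 ?_
    rw [heq]
    exact (hmono j hja hjb p).1
  have hsup : limsup (fun x => Lsum j x - Lsum (j - 1) x) (𝓝 p) ≤ c :=
    le_trans (limsup_le_limsup (Eventually.of_forall fun x => (hmono j hja hjb x).2)) claimU
  have hinf : c ≤ liminf (fun x => Lsum j x - Lsum (j - 1) x) (𝓝 p) :=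
    le_trans claimL (liminf_le_liminf (Eventually.of_forall fun x => (hmono j hja hjb x).1))
  have ht : Tendsto (fun x => Lsum j x - Lsum (j - 1) x) (𝓝 p) (𝓝 c) :=
    tendsto_of_le_liminf_of_limsup_le hinf hsup
  have h2 : (fun x => Lsum j x - Lsum (j - 1) x) p = c := hLjp
  unfold ContinuousAt
  rwa [h2]
end
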